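/- For 1 < q and nonnegative real numbers a, b, c, d with a, c > 0, the 'discrete hidden convexity' inequality: for t ∈ (0,1), setting v₃ = ((1−t)a^q + t c^q)^{1/q} and w₃ = ((1−t)b^q + t d^q)^{1/q}, one has |v₃ − w₃|^p ≤ (1−t)|a − b|^p + t|c − d|^p for all p ≥ q. -/
import Mathlib

open Finset

/-- Two-point weighted Minkowski-type bound. -/
lemma aux_minkowski (q : ℝ) (hq : 1 ≤ q) (t : ℝ) (ht0 : 0 ≤ t) (ht1 : t ≤ 1)
    (a b c d : ℝ) (ha : 0 ≤ a) (hb : 0 ≤ b) (hc : 0 ≤ c) (hd : 0 ≤ d) :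
    ((1 - t) * a ^ q + t * c ^ q) ^ (1 / q) ≤
      ((1 - t) * b ^ q + t * d ^ q) ^ (1 / q) +
      ((1 - t) * |a - b| ^ q + t * |c - d| ^ q) ^ (1 / q) := by
  have hq0 : 0 < q := lt_of_lt_of_le one_pos hq
  have h1t : 0 ≤ 1 - t := by linarith
  set u : ℝ := (1 - t) ^ (1 / q) with hu
  set s : ℝ := t ^ (1 / q) with hs
  have hu0 : 0 ≤ u := Real.rpow_nonneg h1t _
  have hs0 : 0 ≤ s := Real.rpow_nonneg ht0 _
  have huq : u ^ q = 1 - t := by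
    rw [hu, ← Real.rpow_mul h1t, one_div_mul_cancel hq0.ne', Real.rpow_one]
  have hsq : s ^ q = t := by
    rw [hs, ← Real.rpow_mul ht0, one_div_mul_cancel hq0.ne', Real.rpow_one]
  set A : ℝ := |a - b| with hA
  set C : ℝ := |c - d| with hC
  have hA0 : 0 ≤ A := abs_nonneg _
  have hC0 : 0 ≤ C := abs_nonneg _
  have key := Real.Lp_add_le (Finset.univ : Finset (Fin 2))
    ![u * b, s * d] ![u * A, s * C] hq
  simp only [Fin.sum_univ_two, Matrix.cons_val_zero, Matrix.cons_val_one, Matrix.head_cons] at key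
  rw [abs_of_nonneg (by positivity : (0:ℝ) ≤ u * b + u * A),
      abs_of_nonneg (by positivity : (0:ℝ) ≤ s * d + s * C),
      abs_of_nonneg (by positivity : (0:ℝ) ≤ u * b),
      abs_of_nonneg (by positivity : (0:ℝ) ≤ s * d),
      abs_of_nonneg (by positivity : (0:ℝ) ≤ u * A),
      abs_of_nonneg (by positivity : (0:ℝ) ≤ s * C)] at key
  have hmul : ∀ (w x : ℝ), 0 ≤ w → 0 ≤ x → (w * x) ^ q = w ^ q * x ^ q := fun w x hw hx =>
    Real.mul_rpow hw hx
  rw [hmul u b hu0 hb, hmul s d hs0 hd, hmul u A hu0 hA0, hmul s C hs0 hC0,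
      ← mul_add u b A, ← mul_add s d C,
      hmul u (b + A) hu0 (by positivity), hmul s (d + C) hs0 (by positivity),
      huq, hsq] at key
  refine le_trans ?_ key
  apply Real.rpow_le_rpow (by positivity) _ (by positivity)
  have h1 : a ≤ b + A := by
    rw [hA]; rcases abs_cases (a - b) with ⟨h, _⟩ | ⟨h, _⟩ <;> linarith
  have h2 : c ≤ d + C := by
    rw [hC]; rcases abs_cases (c - d) with ⟨h, _⟩ | ⟨h, _⟩ <;> linarith
  have e1 : a ^ q ≤ (b + A) ^ q := Real.rpow_le_rpow ha h1 hq0.le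
  have e2 : c ^ q ≤ (d + C) ^ q := Real.rpow_le_rpow hc h2 hq0.le
  nlinarith [mul_le_mul_of_nonneg_left e1 h1t, mul_le_mul_of_nonneg_left e2 ht0]

/-- Discrete hidden convexity inequality. -/
theorem stmt_2 (p q : ℝ) (hq : 1 < q) (hpq : q ≤ p)
    (a b c d : ℝ) (ha : 0 < a) (hb : 0 ≤ b) (hc : 0 < c) (hd : 0 ≤ d)
    (t : ℝ) (ht0 : 0 < t) (ht1 : t < 1) :
    |((1 - t) * a ^ q + t * c ^ q) ^ (1 / q) -
        ((1 - t) * b ^ q + t * d ^ q) ^ (1 / q)| ^ p ≤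
      (1 - t) * |a - b| ^ p + t * |c - d| ^ p := by
  have hq0 : 0 < q := lt_trans one_pos hq
  have hp0 : 0 < p := lt_of_lt_of_le hq0 hpq
  have h1t : 0 ≤ 1 - t := by linarith
  set A := |a - b| with hA
  set C := |c - d| with hC
  set M : ℝ := ((1 - t) * A ^ q + t * C ^ q) ^ (1 / q) with hM
  have hA0 : 0 ≤ A := abs_nonneg _
  have hC0 : 0 ≤ C := abs_nonneg _
  have hM0 : 0 ≤ M := Real.rpow_nonneg (by positivity) _
  -- step 1: |v - w| ≤ M
  have step1 : |((1 - t) * a ^ q + t * c ^ q) ^ (1 / q) -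
      ((1 - t) * b ^ q + t * d ^ q) ^ (1 / q)| ≤ M := by
    rw [abs_sub_le_iff]
    constructor
    · have := aux_minkowski q hq.le t ht0.le ht1.le a b c d ha.le hb hc.le hd
      rw [hM, hA, hC]; linarith
    · have := aux_minkowski q hq.le t ht0.le ht1.le b a d c hb ha.le hd hc.le
      rw [abs_sub_comm b a, abs_sub_comm d c] at this
      rw [hM, hA, hC]; linarith
  -- step 2: M ^ p ≤ RHS
  have step2 : M ^ p ≤ (1 - t) * A ^ p + t * C ^ p := by
    have hMp : M ^ p = ((1 - t) * A ^ q + t * C ^ q) ^ ((1 / q) * p) := by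
      rw [hM, ← Real.rpow_mul (by positivity)]
    have hs1 : 1 ≤ p / q := (one_le_div hq0).mpr hpq
    have conv := Real.rpow_arith_mean_le_arith_mean_rpow (Finset.univ : Finset (Fin 2))
      ![1 - t, t] ![A ^ q, C ^ q] (fun i _ => by fin_cases i <;> simp [h1t, ht0.le])
      (by simp [Fin.sum_univ_two]) (fun i _ => by fin_cases i <;> simp <;> positivity) hs1
    simp only [Fin.sum_univ_two, Matrix.cons_val_zero, Matrix.cons_val_one,
      Matrix.head_cons] at conv
    have hAq : (A ^ q) ^ (p / q) = A ^ p := by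
      rw [← Real.rpow_mul hA0, mul_div_cancel₀ _ hq0.ne']
    have hCq : (C ^ q) ^ (p / q) = C ^ p := by
      rw [← Real.rpow_mul hC0, mul_div_cancel₀ _ hq0.ne']
    rw [hAq, hCq] at conv
    rw [hMp, one_div, inv_mul_eq_div]
    exact conv
  calc |((1 - t) * a ^ q + t * c ^ q) ^ (1 / q) -
      ((1 - t) * b ^ q + t * d ^ q) ^ (1 / q)| ^ p
      ≤ M ^ p := Real.rpow_le_rpow (abs_nonneg _) step1 hp0.le
    _ ≤ (1 - t) * A ^ p + t * C ^ p := step2
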